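/- Let n ≥ 1 and let H : ℝ^n → ℝ be a Borel measurable conservative statistic. Then H satisfies the selecting property: H(x_1, …, x_n) ∈ {x_1, …, x_n} for every (x_1, …, x_n) ∈ ℝ^n. -/

import Mathlib

open MeasureTheory ENNReal

/-- Any (Borel measurable) conservative statistic satisfies the selecting property. -/
theorem conservative_implies_selecting
    (n : ℕ) (hn : 1 ≤ n) (H : (Fin n → ℝ) → ℝ) (hmeas : Measurable H) (h : ℝ → ℝ)
    (hcons : ∀ μ : Measure ℝ, IsProbabilityMeasure μ → ∀ t : ℝ,
      ((Measure.pi fun _ : Fin n => μ) {x | H x ≤ t}).toReal = h (μ (Set.Iic t)).toReal) :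
    ∀ x : Fin n → ℝ, ∃ i : Fin n, H x = x i := by
  classical
  intro x
  by_contra hx
  push_neg at hx
  set c := H x with hc
  -- choose t' < c with all coordinates < c being ≤ t'
  obtain ⟨t', ht'c, ht'⟩ : ∃ t', t' < c ∧ ∀ i, x i < c → x i ≤ t' := by
    by_cases hs : ∃ i, x i < c
    · obtain ⟨j, hj⟩ := hs
      set s := (Finset.univ.image x).filter (· < c) with hsdef
      have hne : s.Nonempty := ⟨x j, by simp [hsdef, hj]⟩
      refine ⟨s.max' hne, ?_, ?_⟩
      · have hm := s.max'_mem hne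
        exact (Finset.mem_filter.mp hm).2
      · intro i hi
        exact s.le_max' _ (by simp [hsdef, hi])
    · push_neg at hs
      exact ⟨c - 1, by linarith, fun i hi => absurd hi (not_lt.mpr (hs i))⟩
  have hnn : (n : ℝ≥0∞) ≠ 0 := by
    exact_mod_cast Nat.one_le_iff_ne_zero.mp hn
  set μ : Measure ℝ := (n : ℝ≥0∞)⁻¹ • ∑ i : Fin n, Measure.dirac (x i) with hμ
  have hμapp : ∀ s : Set ℝ, MeasurableSet s →
      μ s = (n : ℝ≥0∞)⁻¹ * ∑ i : Fin n, s.indicator 1 (x i) := by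
    intro s hsm
    simp [hμ, Measure.smul_apply, Measure.finset_sum_apply, Measure.dirac_apply' _ hsm,
      smul_eq_mul]
  have hprob : IsProbabilityMeasure μ := by
    constructor
    rw [hμapp _ MeasurableSet.univ]
    simp [ENNReal.inv_mul_cancel hnn (ENNReal.natCast_ne_top n)]
  -- the two Iic's have equal measure
  have hIic : μ (Set.Iic t') = μ (Set.Iic c) := by
    rw [hμapp _ measurableSet_Iic, hμapp _ measurableSet_Iic]
    congr 1
    apply Finset.sum_congr rfl
    intro i _
    have : x i ≤ t' ↔ x i ≤ c := by
      constructor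
      · intro hlt; linarith
      · intro hle
        exact ht' i (lt_of_le_of_ne hle (fun e => hx i e.symm))
    by_cases hxi : x i ≤ t'
    · simp [Set.indicator_apply, Set.mem_Iic, hxi, this.mp hxi]
    · have hnc : ¬ x i ≤ c := fun hc' => hxi (this.mpr hc')
      simp [Set.indicator_apply, Set.mem_Iic, hxi, hnc]
  -- singleton mass
  have hsing : ∀ i, (n : ℝ≥0∞)⁻¹ ≤ μ {x i} := by
    intro i
    rw [hμapp _ (measurableSet_singleton _)]
    have : (1 : ℝ≥0∞) ≤ ∑ j : Fin n, ({x i} : Set ℝ).indicator (1 : ℝ → ℝ≥0∞) (x j) := by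
      have := Finset.single_le_sum
        (f := fun j : Fin n => ({x i} : Set ℝ).indicator (1 : ℝ → ℝ≥0∞) (x j))
        (fun j _ => zero_le) (Finset.mem_univ i)
      simpa using this
    calc (n : ℝ≥0∞)⁻¹ = (n : ℝ≥0∞)⁻¹ * 1 := by ring
      _ ≤ _ := by exact mul_le_mul_right this _
  set ν : Measure (Fin n → ℝ) := Measure.pi fun _ : Fin n => μ with hν
  have hνx : 0 < ν {x} := by
    have hxset : ({x} : Set (Fin n → ℝ)) = Set.pi Set.univ fun i => {x i} := by
      ext y
      simp [funext_iff, Set.mem_univ_pi]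
    rw [hxset, hν, Measure.pi_pi]
    have : (0 : ℝ≥0∞) < ∏ i : Fin n, (n : ℝ≥0∞)⁻¹ := by
      rw [pos_iff_ne_zero]
      exact Finset.prod_ne_zero_iff.mpr
        (fun i _ => ENNReal.inv_ne_zero.mpr (ENNReal.natCast_ne_top n))
    exact lt_of_lt_of_le this (Finset.prod_le_prod' fun i _ => hsing i)
  have hmt' : MeasurableSet {y : Fin n → ℝ | H y ≤ t'} := hmeas measurableSet_Iic
  have hdisj : Disjoint ({x} : Set (Fin n → ℝ)) {y | H y ≤ t'} := by
    rw [Set.disjoint_singleton_left]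
    intro hxm
    simp only [Set.mem_setOf_eq] at hxm
    linarith [hxm, ht'c]
  have hsub : ({x} : Set (Fin n → ℝ)) ∪ {y | H y ≤ t'} ⊆ {y | H y ≤ c} := by
    intro y hy
    rcases hy with hy | hy
    · simp only [Set.mem_singleton_iff] at hy
      simp [hy, hc]
    · simp only [Set.mem_setOf_eq] at hy ⊢
      linarith
  have hlt : ν {y | H y ≤ t'} < ν {y | H y ≤ c} := by
    have h1 : ν ({x} ∪ {y | H y ≤ t'}) = ν {x} + ν {y | H y ≤ t'} :=
      measure_union hdisj hmt'
    have h2 : ν {x} + ν {y | H y ≤ t'} ≤ ν {y | H y ≤ c} := by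
      rw [← h1]; exact measure_mono hsub
    have hfin : ν {y | H y ≤ t'} ≠ ⊤ := by
      have : IsProbabilityMeasure ν := by infer_instance
      exact (measure_lt_top ν _).ne
    calc ν {y | H y ≤ t'} < ν {y | H y ≤ t'} + ν {x} :=
          ENNReal.lt_add_right hfin hνx.ne'
      _ = ν {x} + ν {y | H y ≤ t'} := by ring
      _ ≤ _ := h2
  have heq : ν {y | H y ≤ t'} = ν {y | H y ≤ c} := by
    have e1 := hcons μ hprob t'
    have e2 := hcons μ hprob c
    rw [hIic] at e1
    have : (ν {y | H y ≤ t'}).toReal = (ν {y | H y ≤ c}).toReal := by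
      rw [hν]; rw [e1, e2]
    have hP : IsProbabilityMeasure ν := by infer_instance
    exact (ENNReal.toReal_eq_toReal_iff' (measure_lt_top ν _).ne (measure_lt_top ν _).ne).mp this
  exact absurd heq hlt.ne
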